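/- For any positive integers m, n, there exists a constant c > 0 such that |P^T_m(x) − P^T_n(x)| ≤ c for all x ≥ 1; consequently P^T_m(x) ~ P^T_n(x) as x → ∞. -/
import Mathlib


open Filter Topology

/-- `pseq n` is the `n`-th prime number, with `pseq 1 = 2`. -/
noncomputable def pseq (n : ℕ) : ℕ := Nat.nth Nat.Prime (n - 1)

/-- `pk k n = p^(k)_n`: the `k`-fold iterate of `n ↦ p_n` applied to `n`. -/
noncomputable def pk (k n : ℕ) : ℕ := pseq^[k] n



lemma nth_prime_ge (k : ℕ) : k + 2 ≤ Nat.nth Nat.Prime k := by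
  induction k with
  | zero => exact (Nat.prime_nth_prime 0).two_le
  | succ k ih =>
    have h : Nat.nth Nat.Prime k < Nat.nth Nat.Prime (k+1) :=
      (Nat.nth_lt_nth Nat.infinite_setOf_prime).2 k.lt_succ_self
    omega

lemma lt_pseq (k : ℕ) : k < pseq k := by
  have := nth_prime_ge (k - 1); unfold pseq; omega

lemma pseq_mono : Monotone pseq := fun a b h =>
  (Nat.nth_le_nth Nat.infinite_setOf_prime).2 (Nat.sub_le_sub_right h 1)

lemma pk_succ (j n : ℕ) : pk (j+1) n = pseq (pk j n) := Function.iterate_succ_apply' _ _ _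

lemma pk_lt_pk_succ (j n : ℕ) : pk j n < pk (j+1) n := by
  rw [pk_succ]; exact lt_pseq _

lemma le_pk (j n : ℕ) : j ≤ pk j n := by
  induction j with
  | zero => exact Nat.zero_le _
  | succ j ih => have := pk_lt_pk_succ j n; omega

lemma pk_mono_left (n : ℕ) : Monotone (pk · n) := by
  apply monotone_nat_of_le_succ
  exact fun j => (pk_lt_pk_succ j n).le

lemma pk_mono_right (j : ℕ) : Monotone (pk j) := by
  induction j with
  | zero => exact fun a b h => h
  | succ j ih => intro a b h; rw [pk_succ, pk_succ]; exact pseq_mono (ih h)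

lemma pk_add (j d n : ℕ) : pk (j + d) n = pk j (pk d n) := Function.iterate_add_apply _ _ _ _

lemma setS_finite (n : ℕ) (x : ℝ) : {j : ℕ | 1 ≤ j ∧ (pk j n : ℝ) ≤ x}.Finite := by
  apply (Set.finite_Icc 1 ⌊x⌋₊).subset
  rintro j ⟨h1, h2⟩
  exact ⟨h1, Nat.le_floor (le_trans (by exact_mod_cast le_pk j n) h2)⟩

noncomputable def cnt (n : ℕ) (x : ℝ) : ℕ := {j : ℕ | 1 ≤ j ∧ (pk j n : ℝ) ≤ x}.ncard

lemma cnt_antitone {m n : ℕ} (h : m ≤ n) (x : ℝ) : cnt n x ≤ cnt m x := by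
  apply Set.ncard_le_ncard _ (setS_finite m x)
  rintro j ⟨h1, h2⟩
  exact ⟨h1, le_trans (by exact_mod_cast pk_mono_right j h) h2⟩

lemma cnt_le (m n : ℕ) (x : ℝ) : cnt m x ≤ cnt n x + n := by
  have hsub : {j : ℕ | 1 ≤ j ∧ (pk j m : ℝ) ≤ x} ⊆
      Set.Icc 1 n ∪ ((· + n) '' {j : ℕ | 1 ≤ j ∧ (pk j n : ℝ) ≤ x}) := by
    rintro j ⟨h1, h2⟩
    rcases le_or_gt j n with hj | hj
    · exact Or.inl ⟨h1, hj⟩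
    · refine Or.inr ⟨j - n, ⟨by omega, ?_⟩, by simpa using Nat.sub_add_cancel hj.le⟩
      have hkey : pk (j - n) n ≤ pk j m := by
        have : pk j m = pk (j - n) (pk n m) := by
          rw [← pk_add]; congr 1; omega
        rw [this]
        exact pk_mono_right _ (le_trans (le_pk n m) (le_refl _))
      exact le_trans (by exact_mod_cast hkey) h2
  calc cnt m x ≤ (Set.Icc 1 n ∪ ((· + n) '' {j : ℕ | 1 ≤ j ∧ (pk j n : ℝ) ≤ x})).ncard :=
        Set.ncard_le_ncard hsub (((Set.finite_Icc 1 n).union ((setS_finite n x).image _)))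
    _ ≤ (Set.Icc 1 n).ncard + ((· + n) '' {j : ℕ | 1 ≤ j ∧ (pk j n : ℝ) ≤ x}).ncard :=
        Set.ncard_union_le _ _
    _ ≤ n + cnt n x := by
        gcongr
        · rw [← Finset.coe_Icc, Set.ncard_coe_finset]; simp
        · exact Set.ncard_image_le (setS_finite n x)
    _ = cnt n x + n := by ring

lemma cnt_lower (n K : ℕ) {x : ℝ} (h : (pk K n : ℝ) ≤ x) : K ≤ cnt n x := by
  have hsub : Set.Icc 1 K ⊆ {j : ℕ | 1 ≤ j ∧ (pk j n : ℝ) ≤ x} := by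
    rintro j ⟨h1, h2⟩
    exact ⟨h1, le_trans (by exact_mod_cast pk_mono_left n h2) h⟩
  have := Set.ncard_le_ncard hsub (setS_finite n x)
  rwa [← Finset.coe_Icc, Set.ncard_coe_finset, Nat.card_Icc, Nat.add_sub_cancel] at this

lemma cnt_tendsto (n : ℕ) : Tendsto (fun x : ℝ => (cnt n x : ℝ)) atTop atTop := by
  rw [tendsto_atTop]
  intro b
  filter_upwards [eventually_ge_atTop ((pk ⌈b⌉₊ n : ℕ) : ℝ)] with x hx
  calc b ≤ (⌈b⌉₊ : ℝ) := Nat.le_ceil b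
    _ ≤ (cnt n x : ℝ) := by exact_mod_cast cnt_lower n ⌈b⌉₊ hx

lemma cnt_eq (n : ℕ) (x : ℝ) :
    (Nat.card {j : ℕ | 1 ≤ j ∧ (pk j n : ℝ) ≤ x}) = cnt n x := Nat.card_coe_set_eq _

theorem iterated_prime_columns_counting (m n : ℕ) (hm : 1 ≤ m) (hn : 1 ≤ n) :
    (∃ c : ℝ, 0 < c ∧ ∀ x : ℝ, 1 ≤ x →
      |(Nat.card {j : ℕ | 1 ≤ j ∧ (pk j m : ℝ) ≤ x} : ℝ) -
        (Nat.card {j : ℕ | 1 ≤ j ∧ (pk j n : ℝ) ≤ x} : ℝ)| ≤ c) ∧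
    Tendsto (fun x : ℝ =>
        (Nat.card {j : ℕ | 1 ≤ j ∧ (pk j m : ℝ) ≤ x} : ℝ) /
          (Nat.card {j : ℕ | 1 ≤ j ∧ (pk j n : ℝ) ≤ x} : ℝ)) atTop (𝓝 1) := by
  simp only [cnt_eq]
  have key : ∀ x : ℝ, |(cnt m x : ℝ) - (cnt n x : ℝ)| ≤ (m : ℝ) + n := by
    intro x
    have h1 : (cnt m x : ℝ) ≤ (cnt n x : ℝ) + n := by exact_mod_cast cnt_le m n x
    have h2 : (cnt n x : ℝ) ≤ (cnt m x : ℝ) + m := by exact_mod_cast cnt_le n m x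
    have hm' : (0:ℝ) ≤ m := Nat.cast_nonneg m
    have hn' : (0:ℝ) ≤ n := Nat.cast_nonneg n
    rw [abs_le]; constructor <;> linarith
  constructor
  · exact ⟨(m : ℝ) + n, by positivity, fun x _ => key x⟩
  · have hT := cnt_tendsto n
    have h0 : Tendsto (fun x : ℝ => (cnt m x : ℝ) / (cnt n x : ℝ) - 1) atTop (𝓝 0) := by
      apply squeeze_zero_norm' (a := fun x : ℝ => ((m : ℝ) + n) / (cnt n x : ℝ))
      · filter_upwards [hT.eventually_ge_atTop 1] with x hx
        have hpos : (0:ℝ) < (cnt n x : ℝ) := lt_of_lt_of_le zero_lt_one hx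
        have : (cnt m x : ℝ) / (cnt n x : ℝ) - 1 = ((cnt m x : ℝ) - cnt n x) / cnt n x := by
          field_simp
        rw [Real.norm_eq_abs, this, abs_div, abs_of_pos hpos]
        gcongr
        exact key x
      · exact tendsto_const_nhds.div_atTop hT
    have := h0.add_const 1
    simpa using this
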